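/- Let G be a finite group and H₁, H₂ ≤ G subgroups such that for every conjugacy class C of G, |C ∩ H₁| = |C ∩ H₂| (Gassmann equivalence). Let σ ∈ G and let D ≤ G be any subgroup containing conjugates of H₁ and H₂ with finite index. Then for any prime p not dividing |G| with ℚ_p[G/H₁] ≅ ℚ_p[G/H₂] as ℚ_p[G]-modules, the number of ⟨σ⟩-orbits on G/H₁ of each given size equals the number of ⟨σ⟩-orbits on G/H₂ of that size. -/

import Mathlib

open MulAction Function Subgroup Finset

/-- Trace of the permutation endomorphism of `ι →₀ K` induced by `f : ι → ι` equals the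
number of fixed points of `f`. -/
lemma trace_lmapDomain_eq {K : Type*} [Field K] {ι : Type*} [Fintype ι] [DecidableEq ι]
    (f : ι → ι) :
    LinearMap.trace K (ι →₀ K) (Finsupp.lmapDomain K K f)
      = ((Finset.univ.filter fun c => f c = c).card : K) := by
  rw [LinearMap.trace_eq_matrix_trace K Finsupp.basisSingleOne, Matrix.trace,
    ← Finset.sum_boole]
  refine Finset.sum_congr rfl fun c _ => ?_
  rw [Matrix.diag_apply, LinearMap.toMatrix_apply]
  simp [Finsupp.single_apply, eq_comm]

/-- A `ℚ_p[G]`-linear isomorphism of permutation modules forces equal fixed-point counts. -/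
lemma fixed_count_eq {G : Type*} [Group G] [Finite G] {H₁ H₂ : Subgroup G}
    {p : ℕ} [Fact p.Prime]
    (e : ((G ⧸ H₁) →₀ ℚ_[p]) ≃ₗ[ℚ_[p]] ((G ⧸ H₂) →₀ ℚ_[p]))
    (hE : ∀ (g : G) (x : (G ⧸ H₁) →₀ ℚ_[p]),
      e (Finsupp.mapDomain (fun c => g • c) x) = Finsupp.mapDomain (fun c => g • c) (e x))
    (g : G) :
    Nat.card {c : G ⧸ H₁ // g • c = c} = Nat.card {c : G ⧸ H₂ // g • c = c} := by
  classical
  have i1 := Fintype.ofFinite (G ⧸ H₁)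
  have i2 := Fintype.ofFinite (G ⧸ H₂)
  have hconj : Finsupp.lmapDomain ℚ_[p] ℚ_[p] (fun c : G ⧸ H₂ => g • c)
      = e.conj (Finsupp.lmapDomain ℚ_[p] ℚ_[p] (fun c : G ⧸ H₁ => g • c)) := by
    apply LinearMap.ext; intro x
    rw [LinearEquiv.conj_apply]
    simp only [LinearMap.coe_comp, Function.comp_apply, LinearEquiv.coe_coe,
      Finsupp.lmapDomain_apply]
    rw [hE g (e.symm x), LinearEquiv.apply_symm_apply]
  have htr := congrArg (LinearMap.trace ℚ_[p] _) hconj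
  rw [LinearMap.trace_conj', trace_lmapDomain_eq, trace_lmapDomain_eq] at htr
  have hcard : (Finset.univ.filter fun c : G ⧸ H₂ => g • c = c).card
      = (Finset.univ.filter fun c : G ⧸ H₁ => g • c = c).card := by
    exact_mod_cast htr
  rw [Nat.card_eq_fintype_card, Nat.card_eq_fintype_card, Fintype.card_subtype,
    Fintype.card_subtype, hcard]

/-- In a finite `M`-set, points fixed by `σ ^ n` are exactly points whose
`⟨σ⟩`-orbit size divides `n`. -/
lemma pow_smul_fixed_iff {M : Type*} [Group M] (σ : M) {X : Type*} [MulAction M X] [Finite X]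
    (n : ℕ) (c : X) :
    σ ^ n • c = c ↔
      Nat.card (orbitRel.Quotient.orbit (Quotient.mk'' c : orbitRel.Quotient (zpowers σ) X)) ∣ n := by
  classical
  have : Fintype (orbit (zpowers σ) c) := Fintype.ofFinite _
  rw [pow_smul_eq_iff_minimalPeriod_dvd, minimalPeriod_eq_card,
    orbitRel.Quotient.orbit_mk, Nat.card_eq_fintype_card]

/-- Counting fixed points of `σ ^ n` via orbit sizes. -/
lemma fix_card_sum {M : Type*} [Group M] (σ : M) (X : Type*) [MulAction M X] [Finite X]
    (N : ℕ) (hN : Nat.card X ≤ N) (n : ℕ) :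
    Nat.card {c : X // σ ^ n • c = c} =
      ∑ d ∈ Finset.range (N + 1), (if d ∣ n then d else 0) *
        Nat.card {ω : orbitRel.Quotient (zpowers σ) X // Nat.card ω.orbit = d} := by
  classical
  have iX : Fintype X := Fintype.ofFinite X
  set Q := orbitRel.Quotient (zpowers σ) X with hQ
  have iQ : Fintype Q := Fintype.ofFinite Q
  set F : Q → ℕ := fun ω => Nat.card ω.orbit with hF
  set π : X → Q := fun c => Quotient.mk'' c with hπ
  have hfiber : ∀ ω : Q, (Finset.univ.filter fun c : X => π c = ω).card = F ω := by
    intro ω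
    rw [← Fintype.card_subtype]
    rw [hF]
    rw [← Nat.card_eq_fintype_card]
    exact Nat.card_congr (Equiv.subtypeEquivRight fun c =>
      (orbitRel.Quotient.mem_orbit).symm)
  calc Nat.card {c : X // σ ^ n • c = c}
      = (Finset.univ.filter fun c : X => F (π c) ∣ n).card := by
        rw [Nat.card_eq_fintype_card, Fintype.card_subtype]
        exact congrArg Finset.card
          (Finset.filter_congr fun c _ => pow_smul_fixed_iff σ n c)
    _ = ∑ ω ∈ Finset.univ, ((Finset.univ.filter fun c : X => F (π c) ∣ n).filter
          fun c => π c = ω).card :=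
        Finset.card_eq_sum_card_fiberwise (fun c _ => Finset.mem_univ _)
    _ = ∑ ω : Q, (if F ω ∣ n then F ω else 0) := by
        refine Finset.sum_congr rfl fun ω _ => ?_
        by_cases h : F ω ∣ n
        · rw [if_pos h, ← hfiber ω]
          congr 1
          ext c
          simp only [Finset.mem_filter, Finset.mem_univ, true_and]
          constructor
          · rintro ⟨-, h2⟩; exact h2
          · intro h2; exact ⟨h2 ▸ h, h2⟩
        · rw [if_neg h]
          have : ((Finset.univ.filter fun c : X => F (π c) ∣ n).filter
              fun c => π c = ω) = ∅ := by
            rw [Finset.filter_eq_empty_iff]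
            rintro c hc h2
            rw [Finset.mem_filter] at hc
            exact h (h2 ▸ hc.2)
          rw [this, Finset.card_empty]
    _ = ∑ d ∈ Finset.univ.image F,
          (Finset.univ.filter fun ω => F ω = d).card • (if d ∣ n then d else 0) :=
        by exact Finset.sum_comp (fun d => if d ∣ n then d else 0) F
    _ = ∑ d ∈ Finset.range (N + 1),
          (Finset.univ.filter fun ω => F ω = d).card • (if d ∣ n then d else 0) := by
        refine Finset.sum_subset ?_ ?_
        · intro d hd
          rw [Finset.mem_image] at hd
          obtain ⟨ω, -, rfl⟩ := hd
          rw [Finset.mem_range, Nat.lt_succ_iff]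
          exact le_trans (Nat.card_le_card_of_injective _ Subtype.val_injective) hN
        · intro d _ hd
          have : (Finset.univ.filter fun ω => F ω = d) = ∅ := by
            rw [Finset.filter_eq_empty_iff]
            intro ω _ h
            exact hd (Finset.mem_image.2 ⟨ω, Finset.mem_univ _, h⟩)
          rw [this, Finset.card_empty, zero_smul]
    _ = ∑ d ∈ Finset.range (N + 1), (if d ∣ n then d else 0) *
          Nat.card {ω : Q // F ω = d} := by
        refine Finset.sum_congr rfl fun d _ => ?_
        rw [Nat.card_eq_fintype_card, Fintype.card_subtype, smul_eq_mul, mul_comm]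

/-- There are no `⟨σ⟩`-orbits of size `0`, nor of size exceeding the cardinality of the set. -/
lemma orbit_count_eq_zero {M : Type*} [Group M] (σ : M) (X : Type*) [MulAction M X] [Finite X]
    {d : ℕ} (hd : d = 0 ∨ Nat.card X < d) :
    Nat.card {ω : orbitRel.Quotient (zpowers σ) X // Nat.card ω.orbit = d} = 0 := by
  have : IsEmpty {ω : orbitRel.Quotient (zpowers σ) X // Nat.card ω.orbit = d} := by
    refine ⟨fun ⟨ω, hω⟩ => ?_⟩
    have hne : Nonempty ω.orbit := Set.Nonempty.to_subtype (orbitRel.Quotient.nonempty_orbit ω)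
    have hpos : 0 < Nat.card ω.orbit := Nat.card_pos
    have hle : Nat.card ω.orbit ≤ Nat.card X :=
      Nat.card_le_card_of_injective _ Subtype.val_injective
    rcases hd with rfl | hlt
    · omega
    · omega
  exact Nat.card_of_isEmpty

/-- Let `G` be a finite group and `H₁, H₂ ≤ G` Gassmann-equivalent subgroups (every
conjugacy class meets `H₁` and `H₂` in the same number of elements). Let `σ ∈ G` and let
`D ≤ G` be a subgroup containing conjugates of `H₁` and `H₂` with finite index. Then for
any prime `p` not dividing `|G|` with `ℚ_p[G/H₁] ≅ ℚ_p[G/H₂]` as `ℚ_p[G]`-modules, for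
every `n` the number of `⟨σ⟩`-orbits of size `n` on `G/H₁` equals the number of
`⟨σ⟩`-orbits of size `n` on `G/H₂`. -/
theorem orbit_counts_eq (G : Type*) [Group G] [Finite G] (H₁ H₂ : Subgroup G)
    (hGassmann : ∀ g : G, Nat.card {x : G // x ∈ H₁ ∧ IsConj g x} =
      Nat.card {x : G // x ∈ H₂ ∧ IsConj g x})
    (σ : G) (D : Subgroup G)
    (hD₁ : ∃ g₁ : G, Subgroup.map (MulAut.conj g₁).toMonoidHom H₁ ≤ D ∧
      (Subgroup.map (MulAut.conj g₁).toMonoidHom H₁).relIndex D ≠ 0)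
    (hD₂ : ∃ g₂ : G, Subgroup.map (MulAut.conj g₂).toMonoidHom H₂ ≤ D ∧
      (Subgroup.map (MulAut.conj g₂).toMonoidHom H₂).relIndex D ≠ 0)
    (p : ℕ) [Fact p.Prime] (hp : ¬ p ∣ Nat.card G)
    (hiso : ∃ e : ((G ⧸ H₁) →₀ ℚ_[p]) ≃ₗ[ℚ_[p]] ((G ⧸ H₂) →₀ ℚ_[p]),
      ∀ (g : G) (x : (G ⧸ H₁) →₀ ℚ_[p]),
        e (Finsupp.mapDomain (fun c => g • c) x) = Finsupp.mapDomain (fun c => g • c) (e x)) :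
    ∀ n : ℕ,
      Nat.card {ω : MulAction.orbitRel.Quotient (Subgroup.zpowers σ) (G ⧸ H₁) //
          Nat.card ω.orbit = n} =
        Nat.card {ω : MulAction.orbitRel.Quotient (Subgroup.zpowers σ) (G ⧸ H₂) //
          Nat.card ω.orbit = n} := by
  obtain ⟨e, hE⟩ := hiso
  have hfix : ∀ g : G,
      Nat.card {c : G ⧸ H₁ // g • c = c} = Nat.card {c : G ⧸ H₂ // g • c = c} :=
    fixed_count_eq e hE
  set N := max (Nat.card (G ⧸ H₁)) (Nat.card (G ⧸ H₂)) with hNdef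
  intro n
  induction n using Nat.strong_induction_on with
  | _ n ih =>
  rcases Nat.eq_zero_or_pos n with rfl | hn
  · erw [orbit_count_eq_zero σ (G ⧸ H₁) (Or.inl rfl), orbit_count_eq_zero σ (G ⧸ H₂) (Or.inl rfl)]
  by_cases hnN : n ≤ N
  · have h1 := fix_card_sum σ (G ⧸ H₁) N (le_max_left _ _) n
    have h2 := fix_card_sum σ (G ⧸ H₂) N (le_max_right _ _) n
    have key : ∑ d ∈ Finset.range (N + 1), (if d ∣ n then d else 0) *
          Nat.card {ω : orbitRel.Quotient (zpowers σ) (G ⧸ H₁) // Nat.card ω.orbit = d}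
        = ∑ d ∈ Finset.range (N + 1), (if d ∣ n then d else 0) *
          Nat.card {ω : orbitRel.Quotient (zpowers σ) (G ⧸ H₂) // Nat.card ω.orbit = d} := by
      erw [← h1, ← h2]
      exact hfix (σ ^ n)
    have hmem : n ∈ Finset.range (N + 1) := Finset.mem_range.2 (Nat.lt_succ_of_le hnN)
    rw [← Finset.add_sum_erase _ _ hmem, ← Finset.add_sum_erase _ _ hmem] at key
    have hrest : ∑ d ∈ (Finset.range (N + 1)).erase n, (if d ∣ n then d else 0) *
          Nat.card {ω : orbitRel.Quotient (zpowers σ) (G ⧸ H₁) // Nat.card ω.orbit = d}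
        = ∑ d ∈ (Finset.range (N + 1)).erase n, (if d ∣ n then d else 0) *
          Nat.card {ω : orbitRel.Quotient (zpowers σ) (G ⧸ H₂) // Nat.card ω.orbit = d} := by
      refine Finset.sum_congr rfl fun d hd => ?_
      have hdn : d ≠ n := Finset.ne_of_mem_erase hd
      by_cases hdvd : d ∣ n
      · have hlt : d < n := Nat.lt_of_le_of_ne (Nat.le_of_dvd hn hdvd) hdn
        rw [ih d hlt]
      · rw [if_neg hdvd, zero_mul, zero_mul]
    rw [hrest] at key
    have hterm := Nat.add_right_cancel key
    rw [if_pos dvd_rfl] at hterm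
    exact Nat.eq_of_mul_eq_mul_left hn hterm
  · erw [orbit_count_eq_zero σ (G ⧸ H₁) (Or.inr (by omega : Nat.card (G ⧸ H₁) < n)),
      orbit_count_eq_zero σ (G ⧸ H₂) (Or.inr (by omega : Nat.card (G ⧸ H₂) < n))]
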